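/- Let A be a reduced Noetherian commutative ring with total ring of fractions Q(A), and let Ā denote the integral closure of A in Q(A). Then Ā is a finite A-module if and only if the conductor C_A = Ann_A(Ā/A) contains a non-zerodivisor of A. -/
import Mathlib


set_option synthInstance.maxHeartbeats 1000000
set_option maxHeartbeats 1000000

open scoped nonZeroDivisors

noncomputable section

/-- The conductor of a reduced ring `A` in its integral closure inside `Q(A)`:
`C_A = {a : A | a · Ā ⊆ A}`. -/
def conductorIdeal (A : Type*) [CommRing A] : Ideal A where
  carrier := {a : A | ∀ x ∈ integralClosure A (FractionRing A),
      algebraMap A (FractionRing A) a * x ∈ (algebraMap A (FractionRing A)).range}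
  add_mem' := by
    intro a b ha hb x hx
    rw [map_add, add_mul]
    exact add_mem (ha x hx) (hb x hx)
  zero_mem' := by
    intro x hx
    rw [map_zero, zero_mul]
    exact zero_mem _
  smul_mem' := by
    intro c a ha x hx
    obtain ⟨y, hy⟩ := ha x hx
    refine ⟨c * y, ?_⟩
    rw [map_mul, hy, smul_eq_mul, map_mul, mul_assoc]

/-- A reduced Noetherian commutative ring has finite normalization
(i.e. the integral closure `Ā` of `A` in its total ring of fractions `Q(A)` is a
finite `A`-module) if and only if the conductor `C_A = Ann_A(Ā/A)` contains a
non-zerodivisor of `A`. -/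
theorem normalization_finite_iff_conductor_contains_nonZeroDivisor
    (A : Type*) [CommRing A] [IsReduced A] [IsNoetherianRing A] :
    Module.Finite A (integralClosure A (FractionRing A)) ↔
      ∃ g ∈ conductorIdeal A, g ∈ A⁰ := by
  classical
  set K := FractionRing A
  constructor
  · intro h
    obtain ⟨s, hs⟩ := Module.finite_def.mp h
    obtain ⟨b, hb⟩ := IsLocalization.exist_integer_multiples A⁰ s
      (fun x : integralClosure A K => (x : K))
    refine ⟨b, ?_, b.2⟩
    intro x hx
    have hx' : (⟨x, hx⟩ : integralClosure A K) ∈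
        Submodule.span A (s : Set (integralClosure A K)) := by
      rw [hs]; trivial
    have key : ∀ y : integralClosure A K, y ∈ Submodule.span A (s : Set (integralClosure A K)) →
        algebraMap A K b * (y : K) ∈ (algebraMap A K).range := by
      intro y hy
      refine Submodule.span_induction (fun z hz => ?_) ?_ (fun z w _ _ hz hw => ?_)
        (fun a z _ hz => ?_) hy
      · obtain ⟨c, hc⟩ := hb z hz
        exact ⟨c, by rw [hc, Algebra.smul_def]⟩
      · push_cast; rw [mul_zero]; exact zero_mem _
      · push_cast; rw [mul_add]; exact add_mem hz hw
      · obtain ⟨c, hc⟩ := hz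
        refine ⟨a * c, ?_⟩
        rw [map_mul, hc, SetLike.val_smul, Algebra.smul_def]
        ring
    exact key _ hx'
  · rintro ⟨g, hg, hg0⟩
    have hunit : IsUnit (algebraMap A K g) := IsLocalization.map_units K ⟨g, hg0⟩
    let f : integralClosure A K →ₗ[A] K :=
      { toFun := fun x => algebraMap A K g * (x : K)
        map_add' := by intro x y; simp [mul_add]
        map_smul' := by intro a x; simp [Algebra.smul_def]; ring }
    have hfinj : Function.Injective f := by
      intro x y hxy
      exact Subtype.ext (hunit.mul_left_cancel hxy)
    have hle : LinearMap.range f ≤ LinearMap.range (Algebra.linearMap A K) := by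
      rintro _ ⟨x, rfl⟩
      obtain ⟨a, ha⟩ := hg x x.2
      exact ⟨a, ha⟩
    have hinjA : Function.Injective (algebraMap A K) :=
      IsLocalization.injective K (le_refl A⁰)
    have : IsNoetherian A (LinearMap.range (Algebra.linearMap A K)) :=
      isNoetherian_of_linearEquiv (LinearEquiv.ofInjective (Algebra.linearMap A K) hinjA)
    haveI hN : IsNoetherian A (integralClosure A K) :=
      isNoetherian_of_injective (f.codRestrict _ (fun x => hle ⟨x, rfl⟩))
        (fun x y hxy => hfinj (congrArg Subtype.val hxy))
    infer_instance
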